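/- For L-structures N and M', an embedding f : N → M' preserves all existential formulas; moreover, f preserves all universal formulas if and only if f preserves all ∃∀-formulas. -/
import Mathlib


open FirstOrder Language

universe u v w x

/-- `IsQN true k φ` says that `φ` is a `Σ_k`-formula and `IsQN false k φ` says that `φ` is a
`Π_k`-formula.  In particular `IsQN true 1` captures existential formulas, `IsQN false 1`
universal formulas, and `IsQN true 2` the `∃∀`-formulas. -/
inductive IsQN {L : FirstOrder.Language} {α : Type*} :
    Bool → ℕ → {n : ℕ} → L.BoundedFormula α n → Prop
  | of_isQF {b k n} {φ : L.BoundedFormula α n} : φ.IsQF → IsQN b k φ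
  | of_flip {b k n} {φ : L.BoundedFormula α n} : IsQN (!b) k φ → IsQN b (k + 1) φ
  | ex {k n} {φ : L.BoundedFormula α (n + 1)} : IsQN true (k + 1) φ → IsQN true (k + 1) φ.ex
  | all {k n} {φ : L.BoundedFormula α (n + 1)} : IsQN false (k + 1) φ → IsQN false (k + 1) φ.all

section Aux

variable {L : FirstOrder.Language} {α β : Type*}

theorem isQF_toFormula {n : ℕ} {φ : L.BoundedFormula α n} (h : φ.IsQF) :
    φ.toFormula.IsQF := by
  induction h with
  | falsum => exact BoundedFormula.IsQF.falsum
  | of_isAtomic h =>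
    cases h with
    | equal t₁ t₂ => exact (BoundedFormula.IsAtomic.equal _ _).isQF
    | rel R ts => exact (BoundedFormula.IsAtomic.rel _ _).isQF
  | imp _ _ ih1 ih2 => exact ih1.imp ih2

theorem isQN_relabel {m : ℕ} (g : α → β ⊕ Fin m) :
    ∀ {b k n} {φ : L.BoundedFormula α n}, IsQN b k φ → IsQN b k (φ.relabel g) := by
  intro b k n φ h
  induction h with
  | of_isQF h => exact .of_isQF (h.relabel g)
  | of_flip _ ih => exact .of_flip ih
  | ex _ ih => rw [BoundedFormula.relabel_ex]; exact .ex ih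
  | all _ ih => rw [BoundedFormula.relabel_all]; exact .all ih

theorem isQN_toFormula :
    ∀ {b k n} {φ : L.BoundedFormula α n}, IsQN b k φ → IsQN b k φ.toFormula := by
  intro b k n φ h
  induction h with
  | of_isQF h => exact .of_isQF (isQF_toFormula h)
  | of_flip _ ih => exact .of_flip ih
  | all _ ih =>
    simp only [BoundedFormula.toFormula]
    exact .all (isQN_relabel _ ih)
  | @ex k n φ _ ih =>
    have e : (φ.ex).toFormula = (BoundedFormula.relabel
        (Sum.elim (Sum.inl ∘ Sum.inl) (Sum.map Sum.inr id ∘ finSumFinEquiv.symm))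
        φ.toFormula).ex := by
      simp [BoundedFormula.ex, BoundedFormula.not, BoundedFormula.toFormula]
      exact ⟨rfl, rfl⟩
    rw [e]
    exact .ex (isQN_relabel _ ih)

variable {N : Type w} {M' : Type x} [L.Structure N] [L.Structure M']

theorem realize_isQF_iff (f : N ↪[L] M') {n : ℕ} {φ : L.BoundedFormula α n} (h : φ.IsQF)
    (v : α → N) (xs : Fin n → N) : φ.Realize (f ∘ v) (f ∘ xs) ↔ φ.Realize v xs := by
  induction h with
  | falsum => rfl
  | of_isAtomic h =>
    cases h with
    | equal t₁ t₂ =>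
      simp only [BoundedFormula.realize_bdEqual, ← Sum.comp_elim, HomClass.realize_term]
      exact f.injective.eq_iff
    | rel R ts =>
      simp only [BoundedFormula.realize_rel, ← Sum.comp_elim, HomClass.realize_term]
      exact StrongHomClass.map_rel f R _
  | imp _ _ ih1 ih2 => simp only [BoundedFormula.realize_imp, ih1, ih2]

theorem isQF_of_qn0 {b : Bool} {n : ℕ} {φ : L.BoundedFormula α n} (h : IsQN b 0 φ) :
    φ.IsQF := by
  cases h with
  | of_isQF h => exact h

end Aux

section Main

variable {L : FirstOrder.Language} {N : Type w} {M' : Type x} [L.Structure N] [L.Structure M']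

theorem realize_toFormula_relabel_iff {M : Type*} [L.Structure M] {m n : ℕ}
    (φ : L.BoundedFormula (Fin m) n) (u : Fin m → M) (ys : Fin n → M) :
    (φ.toFormula.relabel (finSumFinEquiv : Fin m ⊕ Fin n ≃ Fin (m + n))).Realize
      (Sum.elim u ys ∘ finSumFinEquiv.symm) ↔ φ.Realize u ys := by
  rw [Formula.realize_relabel, BoundedFormula.realize_toFormula]
  constructor <;> intro h <;> convert h using 2 <;>
    funext i <;> simp [Function.comp]

theorem pi1_bounded (f : N ↪[L] M')
    (h : ∀ (m : ℕ) (φ : L.Formula (Fin m)), IsQN false 1 φ → ∀ v : Fin m → N,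
      Formula.Realize φ v → Formula.Realize φ (f ∘ v))
    {m n : ℕ} {φ : L.BoundedFormula (Fin m) n} (hφ : IsQN false 1 φ)
    (v : Fin m → N) (xs : Fin n → N) (hr : φ.Realize v xs) :
    φ.Realize (f ∘ v) (f ∘ xs) := by
  set ψ : L.Formula (Fin (m + n)) :=
    φ.toFormula.relabel (finSumFinEquiv : Fin m ⊕ Fin n ≃ Fin (m + n)) with hψdef
  have hψ : IsQN false 1 ψ := isQN_relabel _ (isQN_toFormula hφ)
  have h1 : ψ.Realize (Sum.elim v xs ∘ finSumFinEquiv.symm) :=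
    (realize_toFormula_relabel_iff φ v xs).2 hr
  have h2 := h (m + n) ψ hψ _ h1
  have e : f ∘ (Sum.elim v xs ∘ ⇑finSumFinEquiv.symm) =
      Sum.elim (f ∘ v) (f ∘ xs) ∘ ⇑finSumFinEquiv.symm := by
    rw [← Function.comp_assoc, Sum.comp_elim]
  rw [e] at h2
  exact (realize_toFormula_relabel_iff φ (f ∘ v) (f ∘ xs)).1 h2

theorem sigma_step (f : N ↪[L] M') (k₀ : ℕ)
    (hbase : ∀ {m n : ℕ} {φ : L.BoundedFormula (Fin m) n}, IsQN false k₀ φ →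
      ∀ (v : Fin m → N) (xs : Fin n → N), φ.Realize v xs → φ.Realize (f ∘ v) (f ∘ xs)) :
    ∀ {m n : ℕ} {φ : L.BoundedFormula (Fin m) n}, IsQN true (k₀ + 1) φ →
      ∀ (v : Fin m → N) (xs : Fin n → N), φ.Realize v xs → φ.Realize (f ∘ v) (f ∘ xs) := by
  suffices H : ∀ (b : Bool) (k : ℕ) {m n : ℕ} {φ : L.BoundedFormula (Fin m) n}, IsQN b k φ →
      b = true → k = k₀ + 1 →
      ∀ (v : Fin m → N) (xs : Fin n → N), φ.Realize v xs → φ.Realize (f ∘ v) (f ∘ xs) by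
    intro m n φ hφ
    exact H true (k₀ + 1) hφ rfl rfl
  intro b k m n φ h
  induction h with
  | of_isQF h => exact fun _ _ v xs hr => (realize_isQF_iff f h v xs).2 hr
  | @of_flip b k _ _ h _ =>
    rintro hb hk v xs hr
    subst hb
    simp only [Nat.add_right_cancel_iff] at hk
    subst hk
    exact hbase h v xs hr
  | @ex k n φ _ ih =>
    rintro - hk v xs hr
    rw [BoundedFormula.realize_ex] at hr ⊢
    obtain ⟨a, ha⟩ := hr
    refine ⟨f a, ?_⟩
    have := ih rfl hk v (Fin.snoc xs a) ha
    rwa [Fin.comp_snoc] at this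
  | all _ _ => exact fun hb _ => by simp at hb

end Main


/-- an embedding `f : N ↪ M'` of `L`-structures preserves all existential formulas;
moreover, `f` preserves all universal formulas if and only if it preserves all `∃∀`-formulas. -/
theorem statement6 (L : FirstOrder.Language.{u, v}) (N : Type w) (M' : Type x)
    [L.Structure N] [L.Structure M'] (f : N ↪[L] M') :
    -- `f` preserves existential formulas:
    (∀ (m : ℕ) (φ : L.Formula (Fin m)), IsQN true 1 φ → ∀ v : Fin m → N,
      Formula.Realize φ v → Formula.Realize φ (f ∘ v)) ∧
    -- `f` preserves universal formulas iff it preserves `∃∀`-formulas: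
    ((∀ (m : ℕ) (φ : L.Formula (Fin m)), IsQN false 1 φ → ∀ v : Fin m → N,
        Formula.Realize φ v → Formula.Realize φ (f ∘ v)) ↔
      (∀ (m : ℕ) (φ : L.Formula (Fin m)), IsQN true 2 φ → ∀ v : Fin m → N,
        Formula.Realize φ v → Formula.Realize φ (f ∘ v))) := by
  constructor
  · intro m φ hφ v hr
    have hb : ∀ {m n : ℕ} {ψ : L.BoundedFormula (Fin m) n}, IsQN false 0 ψ →
        ∀ (v : Fin m → N) (xs : Fin n → N), ψ.Realize v xs → ψ.Realize (f ∘ v) (f ∘ xs) :=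
      fun h v xs hr => (realize_isQF_iff f (isQF_of_qn0 h) v xs).2 hr
    have := sigma_step f 0 hb hφ v default hr
    rwa [show (⇑f ∘ (default : Fin 0 → N)) = default from funext fun i => i.elim0] at this
  · constructor
    · intro h m φ hφ v hr
      have := sigma_step f 1 (fun h' v xs hr => pi1_bounded f h h' v xs hr) hφ v default hr
      rwa [show (⇑f ∘ (default : Fin 0 → N)) = default from funext fun i => i.elim0] at this
    · intro h m φ hφ v hr
      exact h m φ (IsQN.of_flip (b := true) hφ) v hr
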